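/- Let w ∈ S_n avoid 3412 and 4231, and let s be a simple transposition with sw < w < ws. If no permutation z satisfies z ≤ w, ℓ(z) = ℓ(w) − 1, and zs < z, then ws contains the pattern 3412 or 4231. -/

import Mathlib

open Equiv

/-- `rk w i j` = #{k ≤ i : w(k) ≤ j} (1-indexed), for `w ∈ S_n`. -/
def rk {n : ℕ} (w : Equiv.Perm (Fin n)) (i j : ℕ) : ℕ :=
  (Finset.univ.filter (fun k : Fin n => (k : ℕ) + 1 ≤ i ∧ (w k : ℕ) + 1 ≤ j)).card

/-- Bruhat order on `S_n` via the rank-matrix criterion: `z ≤ w` iff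
`r_{i,j}(z) ≥ r_{i,j}(w)` for all `i,j`. -/
def BruhatLE {n : ℕ} (z w : Equiv.Perm (Fin n)) : Prop :=
  ∀ i ≤ n, ∀ j ≤ n, rk w i j ≤ rk z i j

def BruhatLT {n : ℕ} (z w : Equiv.Perm (Fin n)) : Prop :=
  BruhatLE z w ∧ z ≠ w

/-- Coxeter length = number of inversions. -/
def len {n : ℕ} (w : Equiv.Perm (Fin n)) : ℕ :=
  (Finset.univ.filter (fun p : Fin n × Fin n => p.1 < p.2 ∧ w p.2 < w p.1)).card

/-- One-line notation of `w`, 1-indexed, extended by the identity outside `[1,n]`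
(so that `w(n+1) = n+1`). -/
def ol {n : ℕ} (w : Equiv.Perm (Fin n)) (k : ℕ) : ℕ :=
  if h : 1 ≤ k ∧ k ≤ n then ((w ⟨k - 1, by omega⟩ : Fin n) : ℕ) + 1 else k

/-- The coessential set of `w` (1-indexed pairs). -/
def Coess {n : ℕ} (w : Equiv.Perm (Fin n)) : Set (ℕ × ℕ) :=
  {p | 1 ≤ p.1 ∧ p.1 ≤ n ∧ 1 ≤ p.2 ∧ p.2 ≤ n ∧
    ol w p.1 ≤ p.2 ∧ p.2 < ol w (p.1 + 1) ∧
    ol w⁻¹ p.2 ≤ p.1 ∧ p.1 < ol w⁻¹ (p.2 + 1)}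

/-- `w` contains the pattern 312. -/
def Has312 {n : ℕ} (w : Equiv.Perm (Fin n)) : Prop :=
  ∃ a b c : Fin n, a < b ∧ b < c ∧ w b < w c ∧ w c < w a

/-- `w` contains the pattern 3412. -/
def Has3412 {n : ℕ} (w : Equiv.Perm (Fin n)) : Prop :=
  ∃ a b c d : Fin n, a < b ∧ b < c ∧ c < d ∧ w c < w d ∧ w d < w a ∧ w a < w b

/-- `w` contains the pattern 4231. -/
def Has4231 {n : ℕ} (w : Equiv.Perm (Fin n)) : Prop :=
  ∃ a b c d : Fin n, a < b ∧ b < c ∧ c < d ∧ w d < w b ∧ w b < w c ∧ w c < w a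

/-- `w` is smooth iff it avoids 3412 and 4231. -/
def SmoothPerm {n : ℕ} (w : Equiv.Perm (Fin n)) : Prop := ¬ Has3412 w ∧ ¬ Has4231 w

/-- `w` is codominant iff `i ≤ j` for every `(i,j)` in the coessential set. -/
def Codominant {n : ℕ} (w : Equiv.Perm (Fin n)) : Prop :=
  ∀ p ∈ Coess w, p.1 ≤ p.2

/-- Lexicographic comparison on one-line notations. -/
def LexLe {n : ℕ} (u w : Equiv.Perm (Fin n)) : Prop :=
  u = w ∨ ∃ i : Fin n, (∀ j < i, u j = w j) ∧ u i < w i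

/-- `m` is a Hessenberg function (0-indexed): non-decreasing and `m i ≥ i`. -/
def Hess {n : ℕ} (m : Fin n → Fin n) : Prop :=
  Monotone m ∧ ∀ i, i ≤ m i

/-- `w` is the lexicographically greatest permutation with `w i ≤ m i` for all `i`. -/
def IsLexMax {n : ℕ} (m : Fin n → Fin n) (w : Equiv.Perm (Fin n)) : Prop :=
  (∀ i, w i ≤ m i) ∧ ∀ u : Equiv.Perm (Fin n), (∀ i, u i ≤ m i) → LexLe u w

instance {n : ℕ} (z w : Equiv.Perm (Fin n)) : Decidable (BruhatLE z w) := by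
  unfold BruhatLE; exact Nat.decidableBallLE _ _


lemma card_indicator_helper {n : ℕ} (P Q : Fin n → Prop) [DecidablePred P] [DecidablePred Q]
    (x y : Fin n) (hxy : x ≠ y) (h : ∀ k, k ≠ x → k ≠ y → (P k ↔ Q k)) :
    (Finset.univ.filter P).card + ((if Q x then 1 else 0) + (if Q y then 1 else 0))
      = (Finset.univ.filter Q).card + ((if P x then 1 else 0) + (if P y then 1 else 0)) := by
  have key : ∀ (R : Fin n → Prop) (_ : DecidablePred R),
      (Finset.univ.filter R).card
        = (if R x then 1 else 0) + ((if R y then 1 else 0)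
          + ∑ k ∈ (Finset.univ.erase x).erase y, (if R k then 1 else 0)) := by
    intro R _
    rw [Finset.card_filter]
    rw [← Finset.add_sum_erase _ _ (Finset.mem_univ x)]
    congr 1
    rw [← Finset.add_sum_erase _ _ (Finset.mem_erase.mpr ⟨hxy.symm, Finset.mem_univ y⟩)]
  have kP := key P ‹_›
  have kQ := key Q ‹_›
  rw [kP, kQ]
  have hsum : ∑ k ∈ (Finset.univ.erase x).erase y, (if P k then 1 else 0)
      = ∑ k ∈ (Finset.univ.erase x).erase y, (if Q k then 1 else 0) := by
    apply Finset.sum_congr rfl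
    intro k hk
    simp only [Finset.mem_erase] at hk
    rw [if_congr (h k hk.2.1 hk.1) rfl rfl]
  omega

lemma rk_swap_le {n : ℕ} (w : Equiv.Perm (Fin n)) (x y : Fin n)
    (hxy : (x : ℕ) < y) (hv : (w y : ℕ) < w x) :
    BruhatLE (w * Equiv.swap x y) w := by
  intro i _ j _
  have hxy' : x ≠ y := fun h => by rw [h] at hxy; omega
  have hzx : (w * Equiv.swap x y) x = w y := by
    simp [Equiv.Perm.mul_apply]
  have hzy : (w * Equiv.swap x y) y = w x := by
    simp [Equiv.Perm.mul_apply]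
  have key := card_indicator_helper
      (fun k : Fin n => (k : ℕ) + 1 ≤ i ∧ (w k : ℕ) + 1 ≤ j)
      (fun k : Fin n => (k : ℕ) + 1 ≤ i ∧ ((w * Equiv.swap x y) k : ℕ) + 1 ≤ j) x y hxy'
      (fun k h1 h2 => by
        simp only [Equiv.Perm.mul_apply, Equiv.swap_apply_of_ne_of_ne h1 h2])
  simp only [hzx, hzy] at key
  unfold rk
  split_ifs at key <;> omega

lemma descent_lt {n : ℕ} (z : Equiv.Perm (Fin n)) (l l' : Fin n)
    (hll : (l : ℕ) + 1 = (l' : ℕ)) (hd : (z l' : ℕ) < z l) :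
    BruhatLT (z * Equiv.swap l l') z := by
  refine ⟨rk_swap_le z l l' (by omega) hd, fun h => ?_⟩
  have : (z * Equiv.swap l l') l = z l := by rw [h]
  simp only [Equiv.Perm.mul_apply, Equiv.swap_apply_left] at this
  rw [this] at hd
  omega

lemma ascent_of_lt_mul_swap {n : ℕ} (w : Equiv.Perm (Fin n)) (l l' : Fin n)
    (hll : (l : ℕ) + 1 = (l' : ℕ))
    (h2 : BruhatLT w (w * Equiv.swap l l')) : (w l : ℕ) < w l' := by
  by_contra hle
  have hne : (w l : ℕ) ≠ (w l' : ℕ) := by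
    intro h
    exact absurd (w.injective (Fin.val_injective h)) (fun hh => by
      rw [hh] at hll; omega)
  have hlt : (w l' : ℕ) < w l := by omega
  have hb := h2.1 ((l : ℕ) + 1) (by omega) ((w l' : ℕ) + 1) (by
    have := (w l').isLt; omega)
  -- hb : rk (w * swap l l') (l+1) (w l' + 1) ≤ rk w (l+1) (w l' + 1)
  have hsub : (Finset.univ.filter (fun k : Fin n => (k : ℕ) + 1 ≤ (l : ℕ) + 1 ∧ (w k : ℕ) + 1 ≤ (w l' : ℕ) + 1))
      ⊂ (Finset.univ.filter (fun k : Fin n => (k : ℕ) + 1 ≤ (l : ℕ) + 1 ∧ ((w * Equiv.swap l l') k : ℕ) + 1 ≤ (w l' : ℕ) + 1)) := by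
    rw [Finset.ssubset_def]
    constructor
    · intro k hk
      simp only [Finset.mem_filter, Finset.mem_univ, true_and] at hk ⊢
      have hkl : k ≠ l := by
        intro h; rw [h] at hk; omega
      have hkl' : k ≠ l' := by
        intro h; rw [h] at hk
        have : (l' : ℕ) ≤ l := by omega
        omega
      rw [Equiv.Perm.mul_apply, Equiv.swap_apply_of_ne_of_ne hkl hkl']
      exact hk
    · intro hcon
      have hmem : l ∈ (Finset.univ.filter (fun k : Fin n => (k : ℕ) + 1 ≤ (l : ℕ) + 1 ∧ ((w * Equiv.swap l l') k : ℕ) + 1 ≤ (w l' : ℕ) + 1)) := by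
        simp only [Finset.mem_filter, Finset.mem_univ, true_and]
        simp only [Equiv.Perm.mul_apply,
          Equiv.swap_apply_left]
        omega
      have := hcon hmem
      simp only [Finset.mem_filter, Finset.mem_univ, true_and] at this
      omega
  have := Finset.card_lt_card hsub
  unfold rk at hb
  omega

lemma inv_lt_of_mul_swap_lt {n : ℕ} (w : Equiv.Perm (Fin n)) (l l' : Fin n)
    (hll : (l : ℕ) + 1 = (l' : ℕ))
    (h1 : BruhatLT (Equiv.swap l l' * w) w) : ((w⁻¹ l' : Fin n) : ℕ) < ((w⁻¹ l : Fin n) : ℕ) := by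
  set p := w⁻¹ l' with hp
  set q := w⁻¹ l with hq
  have hwp : w p = l' := w.apply_symm_apply l'
  have hwq : w q = l := w.apply_symm_apply l
  by_contra hle
  have hne : (p : ℕ) ≠ (q : ℕ) := by
    intro h
    have : p = q := Fin.val_injective h
    rw [this] at hwp; rw [hwp] at hwq
    omega
  have hqp : (q : ℕ) < p := by omega
  have hb := h1.1 ((q : ℕ) + 1) (by have := q.isLt; omega) ((l : ℕ) + 1) (by have := l.isLt; omega)
  -- hb : rk w (q+1) (l+1) ≤ rk (swap l l' * w) (q+1) (l+1)
  have hsub : (Finset.univ.filter (fun k : Fin n => (k : ℕ) + 1 ≤ (q : ℕ) + 1 ∧ ((Equiv.swap l l' * w) k : ℕ) + 1 ≤ (l : ℕ) + 1))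
      ⊂ (Finset.univ.filter (fun k : Fin n => (k : ℕ) + 1 ≤ (q : ℕ) + 1 ∧ (w k : ℕ) + 1 ≤ (l : ℕ) + 1)) := by
    rw [Finset.ssubset_def]
    constructor
    · intro k hk
      simp only [Finset.mem_filter, Finset.mem_univ, true_and] at hk ⊢
      simp only [Equiv.Perm.mul_apply] at hk ⊢
      refine ⟨hk.1, ?_⟩
      by_cases h1' : w k = l
      · exfalso
        rw [h1', Equiv.swap_apply_left] at hk
        omega
      by_cases h2' : w k = l'
      · exfalso
        have : k = p := by rw [hp, ← h2', Equiv.Perm.coe_inv, Equiv.symm_apply_apply]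
        rw [this] at hk; omega
      · rw [Equiv.swap_apply_of_ne_of_ne h1' h2'] at hk
        exact hk.2
    · intro hcon
      have hmem : q ∈ (Finset.univ.filter (fun k : Fin n => (k : ℕ) + 1 ≤ (q : ℕ) + 1 ∧ (w k : ℕ) + 1 ≤ (l : ℕ) + 1)) := by
        simp only [Finset.mem_filter, Finset.mem_univ, true_and, hwq]
        omega
      have := hcon hmem
      simp only [Finset.mem_filter, Finset.mem_univ, true_and] at this
      simp only [Equiv.Perm.mul_apply, hwq,
        Equiv.swap_apply_left] at this
      omega
  have := Finset.card_lt_card hsub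
  unfold rk at hb
  omega

def swapPairMap {n : ℕ} (x y : Fin n) : Fin n × Fin n → Fin n × Fin n := fun p =>
  if p.2 = x then (p.1, y)
  else if p.2 = y ∧ (p.1 : ℕ) < (x : ℕ) then (p.1, x)
  else if p.1 = y then (x, p.2)
  else if p.1 = x ∧ (y : ℕ) < (p.2 : ℕ) then (y, p.2)
  else p

lemma swapPairMap_eval {n : ℕ} (x y : Fin n) (a b : Fin n) :
    swapPairMap x y (a, b) =
      (if b = x then (a, y)
        else if b = y ∧ (a : ℕ) < (x : ℕ) then (a, x)
        else if a = y then (x, b)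
        else if a = x ∧ (y : ℕ) < (b : ℕ) then (y, b)
        else (a, b)) := rfl

lemma swapPairMap_invol {n : ℕ} (x y a b : Fin n) (hxy : (x : ℕ) < y) (hab : (a : ℕ) < b) :
    swapPairMap x y (swapPairMap x y (a, b)) = (a, b) := by
  have hxyne : x ≠ y := fun h => by rw [h] at hxy; exact lt_irrefl _ hxy
  have hvne : ∀ u v : Fin n, (u : ℕ) ≠ v → u ≠ v := fun u v h hh => h (by rw [hh])
  rw [swapPairMap_eval x y a b]
  by_cases h1 : b = x
  · rw [if_pos h1]
    have hax : (a : ℕ) < x := by rw [← h1]; exact hab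
    rw [swapPairMap_eval x y a y, if_neg (hvne y x (by omega)), if_pos ⟨rfl, hax⟩, h1]
  · rw [if_neg h1]
    by_cases h2 : b = y ∧ (a : ℕ) < (x : ℕ)
    · rw [if_pos h2]
      rw [swapPairMap_eval x y a x, if_pos rfl, h2.1]
    · rw [if_neg h2]
      by_cases h3 : a = y
      · rw [if_pos h3]
        have hyb : (y : ℕ) < b := by rw [← h3]; exact hab
        rw [swapPairMap_eval x y x b, if_neg (hvne b x (by omega)),
          if_neg (fun hh => (hvne b y (by omega)) hh.1), if_neg hxyne,
          if_pos ⟨rfl, hyb⟩, h3]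
      · rw [if_neg h3]
        by_cases h4 : a = x ∧ (y : ℕ) < (b : ℕ)
        · rw [if_pos h4]
          have hyb : (y : ℕ) < b := h4.2
          rw [swapPairMap_eval x y y b, if_neg (hvne b x (by omega)),
            if_neg (fun hh => (hvne b y (by omega)) hh.1), if_pos rfl, h4.1]
        · rw [if_neg h4]
          rw [swapPairMap_eval, if_neg h1, if_neg h2, if_neg h3, if_neg h4]


lemma len_swap {n : ℕ} (w : Equiv.Perm (Fin n)) (x y : Fin n)
    (hxy : (x : ℕ) < y) (hv : (w y : ℕ) < w x)
    (hcov : ∀ c : Fin n, (x : ℕ) < c → (c : ℕ) < y → ((w c : ℕ) < w y ∨ (w x : ℕ) < w c)) :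
    len (w * Equiv.swap x y) + 1 = len w := by
  classical
  have hxyne : x ≠ y := fun h => by rw [h] at hxy; exact lt_irrefl _ hxy
  set z := w * Equiv.swap x y with hz
  have hzx : z x = w y := by rw [hz]; simp [Equiv.Perm.mul_apply]
  have hzy : z y = w x := by rw [hz]; simp [Equiv.Perm.mul_apply]
  have hzo : ∀ c : Fin n, c ≠ x → c ≠ y → z c = w c := fun c h1 h2 => by
    rw [hz]; simp [Equiv.Perm.mul_apply, Equiv.swap_apply_of_ne_of_ne h1 h2]
  have hvne : ∀ a b : Fin n, (a : ℕ) ≠ b → a ≠ b := fun a b h hh => h (by rw [hh])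
  have hmemxy : (x, y) ∈ Finset.univ.filter (fun p : Fin n × Fin n => p.1 < p.2 ∧ w p.2 < w p.1) := by
    simp only [Finset.mem_filter, Finset.mem_univ, true_and, Fin.lt_def]
    exact ⟨hxy, hv⟩
  have hmain : (Finset.univ.filter (fun p : Fin n × Fin n => p.1 < p.2 ∧ z p.2 < z p.1)).card
      = ((Finset.univ.filter (fun p : Fin n × Fin n => p.1 < p.2 ∧ w p.2 < w p.1)).erase (x, y)).card := by
    apply Finset.card_nbij' (swapPairMap x y) (swapPairMap x y)
    · -- forward membership
      rintro ⟨a, b⟩ ha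
      simp only [Finset.mem_coe, Finset.mem_filter, Finset.mem_univ, true_and, Fin.lt_def] at ha
      obtain ⟨hab, hzab⟩ := ha
      rw [Finset.mem_coe, Finset.mem_erase, swapPairMap_eval]
      by_cases h1 : b = x
      · rw [if_pos h1]
        subst h1
        have hax : (a : ℕ) < b := hab
        have hay : a ≠ y := hvne _ _ (by omega)
        have hane : a ≠ b := hvne _ _ (by omega)
        rw [hzo a hane hay, hzx] at hzab
        refine ⟨fun hh => ?_, ?_⟩
        · rw [Prod.mk.injEq] at hh; exact hane hh.1
        · simp only [Finset.mem_filter, Finset.mem_univ, true_and, Fin.lt_def]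
          exact ⟨by omega, hzab⟩
      rw [if_neg h1]
      by_cases h2 : b = y ∧ (a : ℕ) < (x : ℕ)
      · rw [if_pos h2]
        obtain ⟨hby, hax⟩ := h2
        subst hby
        have hane : a ≠ x := hvne _ _ (by omega)
        have hay : a ≠ b := hvne _ _ (by omega)
        rw [hzo a hane hay, hzy] at hzab
        refine ⟨fun hh => ?_, ?_⟩
        · rw [Prod.mk.injEq] at hh; exact hxyne hh.2
        · simp only [Finset.mem_filter, Finset.mem_univ, true_and, Fin.lt_def]
          exact ⟨hax, hzab⟩
      rw [if_neg h2]
      by_cases h3 : a = y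
      · rw [if_pos h3]
        subst h3
        have hyb : (a : ℕ) < b := hab
        have hbx : b ≠ x := hvne _ _ (by omega)
        have hba : b ≠ a := hvne _ _ (by omega)
        rw [hzo b hbx hba, hzy] at hzab
        refine ⟨fun hh => ?_, ?_⟩
        · rw [Prod.mk.injEq] at hh; exact hba hh.2
        · simp only [Finset.mem_filter, Finset.mem_univ, true_and, Fin.lt_def]
          exact ⟨by omega, hzab⟩
      rw [if_neg h3]
      by_cases h4 : a = x ∧ (y : ℕ) < (b : ℕ)
      · rw [if_pos h4]
        obtain ⟨hax, hyb⟩ := h4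
        subst hax
        have hbx : b ≠ a := hvne _ _ (by omega)
        have hby : b ≠ y := hvne _ _ (by omega)
        rw [hzo b hbx hby, hzx] at hzab
        refine ⟨fun hh => ?_, ?_⟩
        · rw [Prod.mk.injEq] at hh; exact hvne y a (by omega) hh.1
        · simp only [Finset.mem_filter, Finset.mem_univ, true_and, Fin.lt_def]
          exact ⟨hyb, hzab⟩
      rw [if_neg h4]
      -- identity branch
      simp only [Finset.mem_filter, Finset.mem_univ, true_and, Fin.lt_def]
      by_cases ha' : a = x
      · subst ha'
        have hbx : b ≠ a := fun hh => h1 hh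
        have hby : b ≠ y := fun hh => by
          rw [hh] at hzab; rw [hzy, hzx] at hzab; omega
        have hbylt : (b : ℕ) ≤ y := by
          rcases not_and_or.mp h4 with h | h
          · exact absurd rfl h
          · omega
        rw [hzo b hbx hby, hzx] at hzab
        refine ⟨fun hh => ?_, hab, by omega⟩
        · rw [Prod.mk.injEq] at hh; exact hby hh.2
      · by_cases hb' : b = y
        · subst hb'
          have hay : a ≠ b := h3
          have hax : a ≠ x := ha'
          rw [hzo a hax hay, hzy] at hzab
          refine ⟨fun hh => ?_, hab, by omega⟩
          · rw [Prod.mk.injEq] at hh; exact hax hh.1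
        · have hbx : b ≠ x := h1
          rw [hzo a ha' h3, hzo b hbx hb'] at hzab
          refine ⟨fun hh => ?_, hab, hzab⟩
          · rw [Prod.mk.injEq] at hh; exact ha' hh.1
    · -- backward membership
      rintro ⟨a, b⟩ ha
      rw [Finset.mem_coe, Finset.mem_erase] at ha
      obtain ⟨hnexy, ha⟩ := ha
      simp only [Finset.mem_filter, Finset.mem_univ, true_and, Fin.lt_def] at ha
      obtain ⟨hab, hwab⟩ := ha
      rw [swapPairMap_eval]
      simp only [Finset.mem_coe, Finset.mem_filter, Finset.mem_univ, true_and, Fin.lt_def]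
      by_cases h1 : b = x
      · rw [if_pos h1]
        subst h1
        have hax : (a : ℕ) < b := hab
        have hay : a ≠ y := hvne _ _ (by omega)
        have hane : a ≠ b := hvne _ _ (by omega)
        rw [hzo a hane hay, hzy]
        exact ⟨(by omega : (a : ℕ) < (y : ℕ)), hwab⟩
      rw [if_neg h1]
      by_cases h2 : b = y ∧ (a : ℕ) < (x : ℕ)
      · rw [if_pos h2]
        obtain ⟨hby, hax⟩ := h2
        subst hby
        have hane : a ≠ x := hvne _ _ (by omega)
        have hay : a ≠ b := hvne _ _ (by omega)
        rw [hzo a hane hay, hzx]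
        exact ⟨hax, hwab⟩
      rw [if_neg h2]
      by_cases h3 : a = y
      · rw [if_pos h3]
        subst h3
        have hyb : (a : ℕ) < b := hab
        have hbx : b ≠ x := hvne _ _ (by omega)
        have hba : b ≠ a := hvne _ _ (by omega)
        rw [hzo b hbx hba, hzx]
        exact ⟨(by omega : (x : ℕ) < (b : ℕ)), hwab⟩
      rw [if_neg h3]
      by_cases h4 : a = x ∧ (y : ℕ) < (b : ℕ)
      · rw [if_pos h4]
        obtain ⟨hax, hyb⟩ := h4
        subst hax
        have hbx : b ≠ a := hvne _ _ (by omega)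
        have hby : b ≠ y := hvne _ _ (by omega)
        rw [hzo b hbx hby, hzy]
        exact ⟨hyb, hwab⟩
      rw [if_neg h4]
      by_cases ha' : a = x
      · subst ha'
        have hbne : b ≠ y := fun hh => hnexy (by rw [hh])
        have hbx : b ≠ a := h1
        have hblt : (b : ℕ) < y := by
          have : (b : ℕ) ≤ y := by
            rcases not_and_or.mp h4 with h | h
            · exact absurd rfl h
            · omega
          rcases lt_or_eq_of_le this with h | h
          · exact h
          · exact absurd (Fin.val_injective h) hbne
        rw [hzo b hbx hbne, hzx]
        refine ⟨hab, ?_⟩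
        rcases hcov b (by omega) hblt with h | h
        · exact h
        · omega
      · by_cases hb' : b = y
        · subst hb'
          have hax : a ≠ x := ha'
          have hay : a ≠ b := h3
          rw [hzo a hax hay, hzy]
          refine ⟨hab, ?_⟩
          have haxlt : (x : ℕ) < a := by
            have : ¬ ((a : ℕ) < x) := fun hh => h2 ⟨rfl, hh⟩
            have hne : (a : ℕ) ≠ x := fun hh => hax (Fin.val_injective hh)
            omega
          rcases hcov a haxlt (by omega) with h | h
          · omega
          · exact h
        · have hbx : b ≠ x := h1
          rw [hzo a ha' h3, hzo b hbx hb']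
          exact ⟨hab, hwab⟩
    · -- left inverse
      rintro ⟨a, b⟩ ha
      simp only [Finset.mem_coe, Finset.mem_filter, Finset.mem_univ, true_and, Fin.lt_def] at ha
      exact swapPairMap_invol x y a b hxy ha.1
    · -- right inverse
      rintro ⟨a, b⟩ ha
      rw [Finset.mem_coe, Finset.mem_erase] at ha
      simp only [Finset.mem_filter, Finset.mem_univ, true_and, Fin.lt_def] at ha
      exact swapPairMap_invol x y a b hxy ha.2.1
  have hlen : len w = ((Finset.univ.filter (fun p : Fin n × Fin n => p.1 < p.2 ∧ w p.2 < w p.1)).erase (x, y)).card + 1 :=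
    (Finset.card_erase_add_one hmemxy).symm
  rw [hlen]
  exact congrArg (· + 1) hmain

/-- For smooth `w` with `sw < w < ws`: if no `z` covered by `w` satisfies
`zs < z`, then `ws` contains 3412 or 4231. -/
theorem stmt6 {n : ℕ} (w : Equiv.Perm (Fin n)) (hw : SmoothPerm w)
    (l : Fin n) (hl : (l : ℕ) + 1 < n)
    (s : Equiv.Perm (Fin n)) (hs : s = Equiv.swap l ⟨(l : ℕ) + 1, hl⟩)
    (h1 : BruhatLT (s * w) w) (h2 : BruhatLT w (w * s))
    (hno : ¬ ∃ z : Equiv.Perm (Fin n),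
      BruhatLE z w ∧ len z + 1 = len w ∧ BruhatLT (z * s) z) :
    Has3412 (w * s) ∨ Has4231 (w * s) := by
  subst hs
  set l' : Fin n := ⟨(l : ℕ) + 1, hl⟩ with hl'def
  have hl'v : (l' : ℕ) = (l : ℕ) + 1 := rfl
  have hvne : ∀ u v : Fin n, (u : ℕ) ≠ v → u ≠ v := fun u v h hh => h (by rw [hh])
  have hfeq : ∀ u v : Fin n, (u : ℕ) = v → u = v := fun u v h => Fin.val_injective h
  have hll' : l ≠ l' := hvne _ _ (by omega)
  have hab : (w l : ℕ) < w l' := ascent_of_lt_mul_swap w l l' rfl h2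
  obtain ⟨p, hwp⟩ : ∃ p : Fin n, w p = l' := ⟨w⁻¹ l', w.apply_symm_apply l'⟩
  obtain ⟨q, hwq⟩ : ∃ q : Fin n, w q = l := ⟨w⁻¹ l, w.apply_symm_apply l⟩
  have hinvl' : w⁻¹ l' = p := by rw [← hwp, Equiv.Perm.coe_inv, Equiv.symm_apply_apply]
  have hinvl : w⁻¹ l = q := by rw [← hwq, Equiv.Perm.coe_inv, Equiv.symm_apply_apply]
  have hpq : (p : ℕ) < (q : ℕ) := by
    have h0 := inv_lt_of_mul_swap_lt w l l' rfl h1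
    rwa [hinvl', hinvl] at h0
  have hws : ∀ c : Fin n, c ≠ l → c ≠ l' → (w * Equiv.swap l l') c = w c := fun c hc1 hc2 => by
    rw [Equiv.Perm.mul_apply, Equiv.swap_apply_of_ne_of_ne hc1 hc2]
  have hwsl : (w * Equiv.swap l l') l = w l' := by
    rw [Equiv.Perm.mul_apply, Equiv.swap_apply_left]
  have hwsl' : (w * Equiv.swap l l') l' = w l := by
    rw [Equiv.Perm.mul_apply, Equiv.swap_apply_right]
  have hno' : ∀ x y : Fin n, (x : ℕ) < y → (w y : ℕ) < w x →
      (∀ c : Fin n, (x : ℕ) < c → (c : ℕ) < y → ((w c : ℕ) < w y ∨ (w x : ℕ) < w c)) →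
      ¬ (((w * Equiv.swap x y) l' : ℕ) < ((w * Equiv.swap x y) l : ℕ)) := by
    intro x y hxy hv hcov hd
    exact hno ⟨w * Equiv.swap x y, rk_swap_le w x y hxy hv, len_swap w x y hxy hv hcov,
      descent_lt _ l l' rfl hd⟩
  have hwinj : ∀ u v : Fin n, (w u : ℕ) = w v → u = v := fun u v h =>
    w.injective (Fin.val_injective h)
  by_cases hB : ∃ y : Fin n, (l : ℕ) + 1 < y ∧ (w y : ℕ) < w l
  · -- a small value to the right: 4231 in ws
    right
    have hBne : (Finset.univ.filter (fun y : Fin n => (l : ℕ) + 1 < (y : ℕ) ∧ (w y : ℕ) < w l)).Nonempty := by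
      obtain ⟨y, hy⟩ := hB
      exact ⟨y, by simp only [Finset.mem_filter, Finset.mem_univ, true_and]; exact hy⟩
    obtain ⟨y0, hy0mem, hy0min⟩ := Finset.exists_min_image _ (fun y : Fin n => (y : ℕ)) hBne
    rw [Finset.mem_filter] at hy0mem
    obtain ⟨-, hy01, hy02⟩ := hy0mem
    have hmin : ∀ y : Fin n, (l : ℕ) + 1 < (y : ℕ) → (w y : ℕ) < w l → (y0 : ℕ) ≤ y := by
      intro y hy1 hy2
      exact hy0min y (by simp only [Finset.mem_filter, Finset.mem_univ, true_and]; exact ⟨hy1, hy2⟩)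
    have hc : ∃ c : Fin n, (l' : ℕ) < c ∧ (c : ℕ) < y0 ∧ (w y0 : ℕ) < w c ∧ (w c : ℕ) < w l' := by
      by_contra hnc
      push_neg at hnc
      refine hno' l' y0 (by omega) (by omega) ?_ ?_
      · intro c hc1 hc2
        by_cases hcw : (w c : ℕ) < w y0
        · exact Or.inl hcw
        · have h3 := hnc c hc1 hc2
          have : (w c : ℕ) ≠ w y0 := fun h => (hvne c y0 (by omega)) (hwinj _ _ h)
          have hge : (w y0 : ℕ) < w c := by omega
          have := h3 hge
          have : (w c : ℕ) ≠ w l' := fun h => (hvne c l' (by omega)) (hwinj _ _ h)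
          omega
      · have e1 : (w * Equiv.swap l' y0) l' = w y0 := by
          rw [Equiv.Perm.mul_apply, Equiv.swap_apply_left]
        have e2 : (w * Equiv.swap l' y0) l = w l := by
          rw [Equiv.Perm.mul_apply,
            Equiv.swap_apply_of_ne_of_ne (hvne l l' (by omega)) (hvne l y0 (by omega))]
        rw [e1, e2]
        omega
    obtain ⟨c, hc1, hc2, hc3, hc4⟩ := hc
    have hlc : (w l : ℕ) < w c := by
      by_contra hcon
      have hne : (w c : ℕ) ≠ w l := fun h => (hvne c l (by omega)) (hwinj _ _ h)
      have : (w c : ℕ) < w l := by omega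
      have := hmin c (by omega) this
      omega
    refine ⟨l, l', c, y0, ?_, ?_, ?_, ?_, ?_, ?_⟩
    · exact Fin.lt_def.mpr (by omega)
    · exact Fin.lt_def.mpr (by omega)
    · exact Fin.lt_def.mpr (by omega)
    · rw [hws y0 (hvne _ _ (by omega)) (hvne _ _ (by omega)), hwsl']
      exact Fin.lt_def.mpr (by omega)
    · rw [hws c (hvne _ _ (by omega)) (hvne _ _ (by omega)), hwsl']
      exact Fin.lt_def.mpr (by omega)
    · rw [hws c (hvne _ _ (by omega)) (hvne _ _ (by omega)), hwsl]
      exact Fin.lt_def.mpr (by omega)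
  by_cases hA : ∃ x : Fin n, (x : ℕ) < l ∧ (w l' : ℕ) < w x
  · -- a big value to the left: 4231 in ws
    right
    have hAne : (Finset.univ.filter (fun x : Fin n => (x : ℕ) < (l : ℕ) ∧ (w l' : ℕ) < w x)).Nonempty := by
      obtain ⟨x, hx⟩ := hA
      exact ⟨x, by simp only [Finset.mem_filter, Finset.mem_univ, true_and]; exact hx⟩
    obtain ⟨x0, hx0mem, hx0max⟩ := Finset.exists_max_image _ (fun x : Fin n => (x : ℕ)) hAne
    rw [Finset.mem_filter] at hx0mem
    obtain ⟨-, hx01, hx02⟩ := hx0mem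
    have hmax : ∀ x : Fin n, (x : ℕ) < l → (w l' : ℕ) < w x → (x : ℕ) ≤ x0 := by
      intro x hx1 hx2
      exact hx0max x (by simp only [Finset.mem_filter, Finset.mem_univ, true_and]; exact ⟨hx1, hx2⟩)
    have hc : ∃ c : Fin n, (x0 : ℕ) < c ∧ (c : ℕ) < l ∧ (w l : ℕ) < w c ∧ (w c : ℕ) < w x0 := by
      by_contra hnc
      push_neg at hnc
      refine hno' x0 l hx01 (by omega) ?_ ?_
      · intro c hcc1 hcc2
        by_cases hcw : (w c : ℕ) < w l
        · exact Or.inl hcw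
        · have h3 := hnc c hcc1 hcc2
          have : (w c : ℕ) ≠ w l := fun h => (hvne c l (by omega)) (hwinj _ _ h)
          have hge : (w l : ℕ) < w c := by omega
          have := h3 hge
          have : (w c : ℕ) ≠ w x0 := fun h => (hvne c x0 (by omega)) (hwinj _ _ h)
          omega
      · have e1 : (w * Equiv.swap x0 l) l' = w l' := by
          rw [Equiv.Perm.mul_apply,
            Equiv.swap_apply_of_ne_of_ne (hvne l' x0 (by omega)) (hvne l' l (by omega))]
        have e2 : (w * Equiv.swap x0 l) l = w x0 := by
          rw [Equiv.Perm.mul_apply, Equiv.swap_apply_right]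
        rw [e1, e2]
        omega
    obtain ⟨c, hcc1, hcc2, hcc3, hcc4⟩ := hc
    have hcl' : (w c : ℕ) < w l' := by
      by_contra hcon
      have hne : (w c : ℕ) ≠ w l' := fun h => (hvne c l' (by omega)) (hwinj _ _ h)
      have : (w l' : ℕ) < w c := by omega
      have := hmax c hcc2 this
      omega
    refine ⟨x0, c, l, l', ?_, ?_, ?_, ?_, ?_, ?_⟩
    · exact Fin.lt_def.mpr (by omega)
    · exact Fin.lt_def.mpr (by omega)
    · exact Fin.lt_def.mpr (by omega)
    · rw [hws c (hvne _ _ (by omega)) (hvne _ _ (by omega)), hwsl']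
      exact Fin.lt_def.mpr (by omega)
    · rw [hws c (hvne _ _ (by omega)) (hvne _ _ (by omega)), hwsl]
      exact Fin.lt_def.mpr (by omega)
    · rw [hws x0 (hvne _ _ (by omega)) (hvne _ _ (by omega)), hwsl]
      exact Fin.lt_def.mpr (by omega)
  · -- both empty: 3412 in ws
    left
    push_neg at hA hB
    have hB' : ∀ y : Fin n, (l : ℕ) + 1 < y → (w l : ℕ) < w y := by
      intro y hy
      have h3 := hB y hy
      have : (w y : ℕ) ≠ w l := fun h => (hvne y l (by omega)) (hwinj _ _ h)
      omega
    have hA' : ∀ x : Fin n, (x : ℕ) < l → (w x : ℕ) < w l' := by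
      intro x hx
      have h3 := hA x hx
      have : (w x : ℕ) ≠ w l' := fun h => (hvne x l' (by omega)) (hwinj _ _ h)
      omega
    -- positions of small values are < l
    have hmapS : ∀ bound : ℕ, bound ≤ (w l : ℕ) →
        ∀ v : Fin n, (v : ℕ) < bound → ((w⁻¹ v : Fin n) : ℕ) < l := by
      intro bound hbound v hv
      set k : Fin n := w⁻¹ v with hkdef
      have hwk : w k = v := w.apply_symm_apply v
      have hkl : k ≠ l := fun h => by
        rw [h] at hwk; omega
      have hkl' : k ≠ l' := fun h => by
        rw [h] at hwk; omega
      have hkle : ¬ ((l : ℕ) + 1 < k) := fun h => by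
        have := hB' k h; omega
      have h1 : (k : ℕ) ≠ l := fun h => hkl (hfeq _ _ h)
      have h2 : (k : ℕ) ≠ (l : ℕ) + 1 := fun h => hkl' (hfeq _ _ h)
      omega
    -- positions of big values are > l+1
    have hmapL : ∀ bound : ℕ, (w l' : ℕ) ≤ bound →
        ∀ v : Fin n, bound < (v : ℕ) → (l : ℕ) + 1 < ((w⁻¹ v : Fin n) : ℕ) := by
      intro bound hbound v hv
      set k : Fin n := w⁻¹ v with hkdef
      have hwk : w k = v := w.apply_symm_apply v
      have hkl : k ≠ l := fun h => by
        rw [h] at hwk; omega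
      have hkl' : k ≠ l' := fun h => by
        rw [h] at hwk; omega
      have hkge : ¬ ((k : ℕ) < l) := fun h => by
        have := hA' k h; omega
      have h1 : (k : ℕ) ≠ l := fun h => hkl (hfeq _ _ h)
      have h2 : (k : ℕ) ≠ (l : ℕ) + 1 := fun h => hkl' (hfeq _ _ h)
      omega
    -- w l ≤ l
    have c3 : (w l : ℕ) ≤ l := by
      by_contra hgt
      push_neg at hgt
      have hcard1 : (Finset.univ.filter (fun v : Fin n => (v : ℕ) < w l)).card
          ≤ (Finset.univ.filter (fun k : Fin n => (k : ℕ) < l)).card := by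
        apply Finset.card_le_card_of_injOn (fun v => w⁻¹ v)
        · intro v hv
          rw [Finset.mem_coe, Finset.mem_filter] at hv ⊢
          exact ⟨Finset.mem_univ _, hmapS (w l) le_rfl v hv.2⟩
        · intro u _ v _ h
          exact w⁻¹.injective h
      have hsub : (Finset.univ.filter (fun k : Fin n => (k : ℕ) < l))
          ⊂ (Finset.univ.filter (fun v : Fin n => (v : ℕ) < w l)) := by
        rw [Finset.ssubset_def]
        constructor
        · intro k hk
          rw [Finset.mem_filter] at hk ⊢
          exact ⟨Finset.mem_univ _, by omega⟩
        · intro hcon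
          have := hcon (Finset.mem_filter.mpr ⟨Finset.mem_univ l, hgt⟩)
          rw [Finset.mem_filter] at this
          omega
      have := Finset.card_lt_card hsub
      omega
    -- l+1 ≤ w l'
    have c4 : (l : ℕ) + 1 ≤ w l' := by
      by_contra hgt
      push_neg at hgt
      have hcard1 : (Finset.univ.filter (fun v : Fin n => (w l' : ℕ) < v)).card
          ≤ (Finset.univ.filter (fun k : Fin n => (l : ℕ) + 1 < k)).card := by
        apply Finset.card_le_card_of_injOn (fun v => w⁻¹ v)
        · intro v hv
          rw [Finset.mem_coe, Finset.mem_filter] at hv ⊢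
          exact ⟨Finset.mem_univ _, hmapL (w l') le_rfl v hv.2⟩
        · intro u _ v _ h
          exact w⁻¹.injective h
      have hsub : (Finset.univ.filter (fun k : Fin n => (l : ℕ) + 1 < k))
          ⊂ (Finset.univ.filter (fun v : Fin n => (w l' : ℕ) < v)) := by
        rw [Finset.ssubset_def]
        constructor
        · intro k hk
          rw [Finset.mem_filter] at hk ⊢
          exact ⟨Finset.mem_univ _, by omega⟩
        · intro hcon
          have := hcon (Finset.mem_filter.mpr ⟨Finset.mem_univ l', by rw [hl'v]; omega⟩)
          rw [Finset.mem_filter] at this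
          rw [hl'v] at this
          omega
      have := Finset.card_lt_card hsub
      omega
    -- q ≠ l', p ≠ l
    have hql' : (q : ℕ) ≠ (l : ℕ) + 1 := by
      intro h
      have : q = l' := hfeq _ _ h
      rw [this] at hwq
      have : (w l' : ℕ) = l := by rw [hwq]
      omega
    have hpl : (p : ℕ) ≠ (l : ℕ) := by
      intro h
      have : p = l := hfeq _ _ h
      rw [this] at hwp
      have : (w l : ℕ) = (l : ℕ) + 1 := by rw [hwp]
      omega
    -- q ≠ l (i.e. w l ≠ l)
    have hql : (q : ℕ) ≠ (l : ℕ) := by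
      intro h
      have hwleq : (w l : ℕ) = l := by
        have : q = l := hfeq _ _ h
        rw [this] at hwq
        rw [hwq]
      have hmap : ∀ v : Fin n, (v : ℕ) < l → ((w⁻¹ v : Fin n) : ℕ) < l := by
        intro v hv
        exact hmapS l (by omega) v hv
      have hcard1 : (insert l' (Finset.univ.filter (fun v : Fin n => (v : ℕ) < l))).card
          ≤ (Finset.univ.filter (fun k : Fin n => (k : ℕ) < l)).card := by
        apply Finset.card_le_card_of_injOn (fun v => w⁻¹ v)
        · intro v hv
          rw [Finset.mem_coe, Finset.mem_insert] at hv
          rw [Finset.mem_coe, Finset.mem_filter]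
          rcases hv with hv | hv
          · simp only [hv, hinvl']
            exact ⟨Finset.mem_univ _, by omega⟩
          · rw [Finset.mem_filter] at hv
            exact ⟨Finset.mem_univ _, hmap v hv.2⟩
        · intro u _ v _ h
          exact w⁻¹.injective h
      have hnotmem : l' ∉ Finset.univ.filter (fun v : Fin n => (v : ℕ) < l) := by
        rw [Finset.mem_filter]
        rintro ⟨-, hcon⟩
        rw [hl'v] at hcon
        omega
      rw [Finset.card_insert_of_notMem hnotmem] at hcard1
      omega
    -- p ≠ l+1 (i.e. w l' ≠ l+1)
    have hpl' : (p : ℕ) ≠ (l : ℕ) + 1 := by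
      intro h
      have hwl'eq : (w l' : ℕ) = (l : ℕ) + 1 := by
        have : p = l' := hfeq _ _ h
        rw [this] at hwp
        rw [hwp]
      have hmap : ∀ v : Fin n, (l : ℕ) + 1 < v → (l : ℕ) + 1 < ((w⁻¹ v : Fin n) : ℕ) := by
        intro v hv
        exact hmapL ((l : ℕ) + 1) (by omega) v hv
      have hcard1 : (insert l (Finset.univ.filter (fun v : Fin n => (l : ℕ) + 1 < v))).card
          ≤ (Finset.univ.filter (fun k : Fin n => (l : ℕ) + 1 < k)).card := by
        apply Finset.card_le_card_of_injOn (fun v => w⁻¹ v)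
        · intro v hv
          rw [Finset.mem_coe, Finset.mem_insert] at hv
          rw [Finset.mem_coe, Finset.mem_filter]
          rcases hv with hv | hv
          · simp only [hv, hinvl]
            exact ⟨Finset.mem_univ _, by omega⟩
          · rw [Finset.mem_filter] at hv
            exact ⟨Finset.mem_univ _, hmap v hv.2⟩
        · intro u _ v _ h
          exact w⁻¹.injective h
      have hnotmem : l ∉ Finset.univ.filter (fun v : Fin n => (l : ℕ) + 1 < v) := by
        rw [Finset.mem_filter]
        rintro ⟨-, hcon⟩
        omega
      rw [Finset.card_insert_of_notMem hnotmem] at hcard1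
      omega
    -- case split on positions of p and q
    rcases lt_or_gt_of_ne hpl with hpleft | hpright
    · -- p < l
      rcases lt_or_gt_of_ne hql with hqleft | hqright
      · -- both left: find y > l+1 with w y < l
        have hwll : (w l : ℕ) < l := by
          rcases lt_or_eq_of_le c3 with h | h
          · exact h
          · exfalso
            apply hql
            have : w l = l := hfeq _ _ h
            have h9 : q = l := hwinj q l (by rw [hwq, this])
            rw [h9]
        have hbl : (l : ℕ) + 1 < w l' := by
          rcases lt_or_eq_of_le c4 with h | h
          · exact h
          · exfalso
            apply hpl'
            have : w l' = l' := hfeq _ _ h.symm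
            have h9 : p = l' := hwinj p l' (by rw [hwp, this])
            rw [h9, hl'v]
        have hy : ∃ y : Fin n, (l : ℕ) + 1 < y ∧ (w y : ℕ) < l := by
          by_contra hny
          push_neg at hny
          have hmap : ∀ k : Fin n, (l : ℕ) < k → (l : ℕ) + 1 < w k := by
            intro k hk
            by_cases hk' : (k : ℕ) = (l : ℕ) + 1
            · have : k = l' := hfeq _ _ hk'
              rw [this]
              exact hbl
            · have hk2 : (l : ℕ) + 1 < k := by omega
              have h5 := hny k hk2
              have h6 : (w k : ℕ) ≠ l := by
                intro h
                have : w k = l := hfeq _ _ h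
                have h9 : k = q := hwinj k q (by rw [hwq, this])
                rw [h9] at hk2
                omega
              have h7 : (w k : ℕ) ≠ (l : ℕ) + 1 := by
                intro h
                have : w k = l' := hfeq _ _ h
                have h9 : k = p := hwinj k p (by rw [hwp, this])
                rw [h9] at hk2
                omega
              omega
          have hcard1 : (Finset.univ.filter (fun k : Fin n => (l : ℕ) < k)).card
              ≤ (Finset.univ.filter (fun v : Fin n => (l : ℕ) + 1 < v)).card := by
            apply Finset.card_le_card_of_injOn (fun k => w k)
            · intro k hk
              rw [Finset.mem_coe, Finset.mem_filter] at hk ⊢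
              exact ⟨Finset.mem_univ _, hmap k hk.2⟩
            · intro u _ v _ h
              exact w.injective h
          have hsub : (Finset.univ.filter (fun v : Fin n => (l : ℕ) + 1 < v))
              ⊂ (Finset.univ.filter (fun k : Fin n => (l : ℕ) < k)) := by
            rw [Finset.ssubset_def]
            constructor
            · intro k hk
              rw [Finset.mem_filter] at hk ⊢
              exact ⟨Finset.mem_univ _, by omega⟩
            · intro hcon
              have := hcon (Finset.mem_filter.mpr ⟨Finset.mem_univ l', by rw [hl'v]; omega⟩)
              rw [Finset.mem_filter, hl'v] at this
              omega
          have := Finset.card_lt_card hsub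
          omega
        obtain ⟨y, hy1, hy2⟩ := hy
        refine ⟨q, l, l', y, ?_, ?_, ?_, ?_, ?_, ?_⟩
        · exact Fin.lt_def.mpr (by omega)
        · exact Fin.lt_def.mpr (by omega)
        · exact Fin.lt_def.mpr (by omega)
        · rw [hwsl', hws y (hvne _ _ (by omega)) (hvne _ _ (by omega))]
          exact Fin.lt_def.mpr (hB' y hy1)
        · rw [hws y (hvne _ _ (by omega)) (hvne _ _ (by omega)),
            hws q (hvne _ _ (by omega)) (hvne _ _ (by omega)), hwq]
          exact Fin.lt_def.mpr (by omega)
        · rw [hws q (hvne _ _ (by omega)) (hvne _ _ (by omega)), hwq, hwsl]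
          exact Fin.lt_def.mpr (by omega)
      · -- p < l, q > l+1 : mixed
        have hwll : (w l : ℕ) < l := by
          rcases lt_or_eq_of_le c3 with h | h
          · exact h
          · exfalso
            apply hql
            have : w l = l := hfeq _ _ h
            have h9 : q = l := hwinj q l (by rw [hwq, this])
            rw [h9]
        have hbl : (l : ℕ) + 1 < w l' := by
          rcases lt_or_eq_of_le c4 with h | h
          · exact h
          · exfalso
            apply hpl'
            have : w l' = l' := hfeq _ _ h.symm
            have h9 : p = l' := hwinj p l' (by rw [hwp, this])
            rw [h9, hl'v]
        refine ⟨p, l, l', q, ?_, ?_, ?_, ?_, ?_, ?_⟩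
        · exact Fin.lt_def.mpr (by omega)
        · exact Fin.lt_def.mpr (by omega)
        · exact Fin.lt_def.mpr (by omega)
        · rw [hwsl', hws q (hvne _ _ (by omega)) (hvne _ _ (by omega)), hwq]
          exact Fin.lt_def.mpr (by omega)
        · rw [hws q (hvne _ _ (by omega)) (hvne _ _ (by omega)), hwq,
            hws p (hvne _ _ (by omega)) (hvne _ _ (by omega)), hwp]
          exact Fin.lt_def.mpr (by omega)
        · rw [hws p (hvne _ _ (by omega)) (hvne _ _ (by omega)), hwp, hwsl]
          exact Fin.lt_def.mpr (by omega)
    · -- p > l+1 (hence q > l+1): both right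
      have hpr : (l : ℕ) + 1 < p := by omega
      have hwll : (w l : ℕ) < l := by
        rcases lt_or_eq_of_le c3 with h | h
        · exact h
        · exfalso
          apply hql
          have : w l = l := hfeq _ _ h
          have h9 : q = l := hwinj q l (by rw [hwq, this])
          rw [h9]
      have hx : ∃ x : Fin n, (x : ℕ) < l ∧ (l : ℕ) + 1 < w x := by
        by_contra hnx
        push_neg at hnx
        have hmap : ∀ k : Fin n, (k : ℕ) < (l : ℕ) + 1 → (w k : ℕ) < l := by
          intro k hk
          by_cases hk' : (k : ℕ) = (l : ℕ)
          · have : k = l := hfeq _ _ hk'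
            rw [this]
            exact hwll
          · have hk2 : (k : ℕ) < l := by omega
            have h5 := hnx k hk2
            have h6 : (w k : ℕ) ≠ l := by
              intro h
              have : w k = l := hfeq _ _ h
              have h9 : k = q := hwinj k q (by rw [hwq, this])
              rw [h9] at hk2
              omega
            have h7 : (w k : ℕ) ≠ (l : ℕ) + 1 := by
              intro h
              have : w k = l' := hfeq _ _ h
              have h9 : k = p := hwinj k p (by rw [hwp, this])
              rw [h9] at hk2
              omega
            omega
        have hcard1 : (Finset.univ.filter (fun k : Fin n => (k : ℕ) < (l : ℕ) + 1)).card
            ≤ (Finset.univ.filter (fun v : Fin n => (v : ℕ) < l)).card := by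
          apply Finset.card_le_card_of_injOn (fun k => w k)
          · intro k hk
            rw [Finset.mem_coe, Finset.mem_filter] at hk ⊢
            exact ⟨Finset.mem_univ _, hmap k hk.2⟩
          · intro u _ v _ h
            exact w.injective h
        have hsub : (Finset.univ.filter (fun v : Fin n => (v : ℕ) < l))
            ⊂ (Finset.univ.filter (fun k : Fin n => (k : ℕ) < (l : ℕ) + 1)) := by
          rw [Finset.ssubset_def]
          constructor
          · intro k hk
            rw [Finset.mem_filter] at hk ⊢
            exact ⟨Finset.mem_univ _, by omega⟩
          · intro hcon
            have := hcon (Finset.mem_filter.mpr ⟨Finset.mem_univ l, by omega⟩)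
            rw [Finset.mem_filter] at this
            omega
        have := Finset.card_lt_card hsub
        omega
      obtain ⟨x, hx1, hx2⟩ := hx
      have hx3 : (w x : ℕ) < w l' := hA' x hx1
      refine ⟨x, l, l', p, ?_, ?_, ?_, ?_, ?_, ?_⟩
      · exact Fin.lt_def.mpr (by omega)
      · exact Fin.lt_def.mpr (by omega)
      · exact Fin.lt_def.mpr (by omega)
      · rw [hwsl', hws p (hvne _ _ (by omega)) (hvne _ _ (by omega)), hwp]
        exact Fin.lt_def.mpr (by omega)
      · rw [hws p (hvne _ _ (by omega)) (hvne _ _ (by omega)), hwp,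
          hws x (hvne _ _ (by omega)) (hvne _ _ (by omega))]
        exact Fin.lt_def.mpr (by omega)
      · rw [hws x (hvne _ _ (by omega)) (hvne _ _ (by omega)), hwsl]
        exact Fin.lt_def.mpr (by omega)
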